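/- Let C ⊂ ℙ^N be an irreducible curve containing the point (1:⋯:1), such that no point of C has two or more zero coordinates (C ∩ Δ_{N−2} = ∅), and suppose there is an s with 2 ≤ s ≤ N such that dim C^{⋆s} ≤ s−1 while dim C^{⋆r} = r for all r ≤ s−1. Then C^{⋆m} = C^{⋆(s−1)} for all m ≥ s−1, hence C^{⋆m} ≠ ℙ^N for all m, and the generic Hadamard-C-rank is infinite. -/

import Mathlib

open MvPolynomial

/-- A polynomial vanishes identically on a set of points of affine space. -/
def vanishesOn {n : ℕ} (f : MvPolynomial (Fin n) ℂ) (S : Set (Fin n → ℂ)) : Prop :=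
  ∀ v ∈ S, MvPolynomial.eval v f = 0

/-- Zariski closure of a set of points: the zero locus of its vanishing ideal. -/
def zclosure {n : ℕ} (S : Set (Fin n → ℂ)) : Set (Fin n → ℂ) :=
  {v | ∀ f : MvPolynomial (Fin n) ℂ, vanishesOn f S → MvPolynomial.eval v f = 0}

/-- Zariski-irreducibility: nonempty and the vanishing ideal is prime. -/
def ZIrred {n : ℕ} (S : Set (Fin n → ℂ)) : Prop :=
  S.Nonempty ∧ ∀ f g : MvPolynomial (Fin n) ℂ,
    vanishesOn (f * g) S → vanishesOn f S ∨ vanishesOn g S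

/-- Krull dimension of (the Zariski closure of) a set, as the order-theoretic
Krull dimension of chains of irreducible Zariski-closed subsets of it. -/
noncomputable def zdim {n : ℕ} (S : Set (Fin n → ℂ)) : WithBot ℕ∞ :=
  Order.krullDim {T : Set (Fin n → ℂ) // zclosure T = T ∧ ZIrred T ∧ T ⊆ zclosure S}

/-- Projective equality of coordinate vectors: equality up to a nonzero scalar. -/
def ProjEq {n : ℕ} (v w : Fin n → ℂ) : Prop :=
  ∃ c : ℂ, c ≠ 0 ∧ w = c • v

/-- The set of (representatives of) Hadamard products of `m` points of `X`. -/
def hprodSet {n : ℕ} (X : Set (Fin n → ℂ)) (m : ℕ) : Set (Fin n → ℂ) :=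
  {p | ∃ f : Fin m → (Fin n → ℂ), (∀ i, f i ∈ X) ∧ ProjEq (∏ i, f i) p}

/-- The `m`-th Hadamard power of `X`: the Zariski closure of the set of Hadamard
products of `m` points of `X`. -/
def hpow {n : ℕ} (X : Set (Fin n → ℂ)) (m : ℕ) : Set (Fin n → ℂ) :=
  zclosure (hprodSet X m)

/-- `p` is an (actual) Hadamard product of `m` points of `X`. -/
def HadDecomp {n : ℕ} (X : Set (Fin n → ℂ)) (m : ℕ) (p : Fin n → ℂ) : Prop :=
  p ∈ hprodSet X m

/-- The Hadamard-`X`-rank of `p` is at most `r` (and finite, in particular). -/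
def HrkLe {n : ℕ} (X : Set (Fin n → ℂ)) (r : ℕ) (p : Fin n → ℂ) : Prop :=
  ∃ m, 1 ≤ m ∧ m ≤ r ∧ HadDecomp X m p

/-- The Hadamard-`X`-rank of `p` is exactly `r`. -/
def HrkEq {n : ℕ} (X : Set (Fin n → ℂ)) (r : ℕ) (p : Fin n → ℂ) : Prop :=
  HadDecomp X r p ∧ ∀ m, 1 ≤ m → m < r → ¬ HadDecomp X m p

/-- The Hadamard-`X`-rank of `p` is finite. -/
def HrkFin {n : ℕ} (X : Set (Fin n → ℂ)) (p : Fin n → ℂ) : Prop :=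
  ∃ m, 1 ≤ m ∧ HadDecomp X m p

/-- `X ⊂ ℙ^{n-1}` is strongly concise: for each coordinate `i` there is a point of `X`
whose `i`-th coordinate vanishes and all other coordinates are nonzero. -/
def StronglyConcise {n : ℕ} (X : Set (Fin n → ℂ)) : Prop :=
  ∀ i : Fin n, ∃ v ∈ X, v i = 0 ∧ ∀ j ≠ i, v j ≠ 0

theorem eval_bind₁' {σ τ : Type} (h : σ → MvPolynomial τ ℂ) (p : MvPolynomial σ ℂ) (v : τ → ℂ) :
    eval v (bind₁ h p) = eval (fun i => eval v (h i)) p := by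
  have := eval₂Hom_bind₁ (RingHom.id ℂ) v h p
  rw [eval, this]; rfl

def joinSet {a b : ℕ} (A : Set (Fin a → ℂ)) (B : Set (Fin b → ℂ)) : Set (Fin (a+b) → ℂ) :=
  {v | (fun i => v (Fin.castAdd b i)) ∈ A ∧ (fun j => v (Fin.natAdd a j)) ∈ B}

lemma addCases_recomb {a b : ℕ} (v : Fin (a+b) → ℂ) :
    (fun i => Fin.addCases (motive := fun _ => ℂ)
      (fun i' => v (Fin.castAdd b i')) (fun j' => v (Fin.natAdd a j')) i) = v := by
  funext i
  refine Fin.addCases (fun i' => ?_) (fun j' => ?_) i <;> simp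

-- partial eval in second block
noncomputable def pevalR {a b : ℕ} (w : Fin b → ℂ) (f : MvPolynomial (Fin (a+b)) ℂ) :
    MvPolynomial (Fin a) ℂ :=
  bind₁ (fun i => Fin.addCases (motive := fun _ => MvPolynomial (Fin a) ℂ)
    (fun i' => X i') (fun j' => C (w j')) i) f

lemma eval_pevalR {a b : ℕ} (w : Fin b → ℂ) (f : MvPolynomial (Fin (a+b)) ℂ) (u : Fin a → ℂ) :
    eval u (pevalR w f) = eval (fun i => Fin.addCases (motive := fun _ => ℂ) u w i) f := by
  rw [pevalR, eval_bind₁']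
  have hv : (fun i => eval u ((fun i => Fin.addCases (motive := fun _ => MvPolynomial (Fin a) ℂ)
      (fun i' => X i') (fun j' => C (w j')) i) i)) = fun i => Fin.addCases (motive := fun _ => ℂ) u w i := by
    funext i
    refine Fin.addCases (fun i' => ?_) (fun j' => ?_) i <;> simp
  rw [hv]

noncomputable def pevalL {a b : ℕ} (u : Fin a → ℂ) (f : MvPolynomial (Fin (a+b)) ℂ) :
    MvPolynomial (Fin b) ℂ :=
  bind₁ (fun i => Fin.addCases (motive := fun _ => MvPolynomial (Fin b) ℂ)
    (fun i' => C (u i')) (fun j' => X j') i) f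

lemma eval_pevalL {a b : ℕ} (u : Fin a → ℂ) (f : MvPolynomial (Fin (a+b)) ℂ) (w : Fin b → ℂ) :
    eval w (pevalL u f) = eval (fun i => Fin.addCases (motive := fun _ => ℂ) u w i) f := by
  rw [pevalL, eval_bind₁']
  have hv : (fun i => eval w ((fun i => Fin.addCases (motive := fun _ => MvPolynomial (Fin b) ℂ)
      (fun i' => C (u i')) (fun j' => X j') i) i)) = fun i => Fin.addCases (motive := fun _ => ℂ) u w i := by
    funext i
    refine Fin.addCases (fun i' => ?_) (fun j' => ?_) i <;> simp
  rw [hv]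

lemma mem_joinSet {a b : ℕ} {A : Set (Fin a → ℂ)} {B : Set (Fin b → ℂ)}
    {u : Fin a → ℂ} {w : Fin b → ℂ} (hu : u ∈ A) (hw : w ∈ B) :
    (fun i => Fin.addCases (motive := fun _ => ℂ) u w i) ∈ joinSet A B := by
  constructor
  · simpa using hu
  · simpa using hw

lemma ZIrred.join {a b : ℕ} {A : Set (Fin a → ℂ)} {B : Set (Fin b → ℂ)}
    (hA : ZIrred A) (hB : ZIrred B) : ZIrred (joinSet A B) := by
  obtain ⟨u0, hu0⟩ := hA.1
  obtain ⟨w0, hw0⟩ := hB.1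
  refine ⟨⟨_, mem_joinSet hu0 hw0⟩, fun f g hfg => ?_⟩
  by_contra hcon
  push_neg at hcon
  obtain ⟨⟨v1, hv1, hf1⟩, ⟨v2, hv2, hg1⟩⟩ :
      (∃ v ∈ joinSet A B, eval v f ≠ 0) ∧ (∃ v ∈ joinSet A B, eval v g ≠ 0) := by
    constructor
    · by_contra h; push_neg at h; exact hcon.1 h
    · by_contra h; push_neg at h; exact hcon.2 h
  -- for each u ∈ A, (pevalL u f) or (pevalL u g) vanishes on B
  have key : ∀ u ∈ A, vanishesOn (pevalL u f) B ∨ vanishesOn (pevalL u g) B := by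
    intro u hu
    apply hB.2
    intro w hw
    have : eval w (pevalL u f * pevalL u g) = eval (fun i => Fin.addCases (motive := fun _ => ℂ) u w i) (f * g) := by
      simp [eval_pevalL]
    rw [this]
    exact hfg _ (mem_joinSet hu hw)
  set w1 : Fin b → ℂ := fun j => v1 (Fin.natAdd a j) with hw1def
  set w2 : Fin b → ℂ := fun j => v2 (Fin.natAdd a j) with hw2def
  have hw1B : w1 ∈ B := hv1.2
  have hw2B : w2 ∈ B := hv2.2
  -- polynomials on A
  have hpq : vanishesOn (pevalR w1 f * pevalR w2 g) A := by
    intro u hu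
    rw [map_mul]
    rcases key u hu with h | h
    · have := h w1 hw1B
      rw [eval_pevalL] at this
      rw [eval_pevalR, eval_pevalR, this, zero_mul]
    · have := h w2 hw2B
      rw [eval_pevalL] at this
      rw [eval_pevalR, eval_pevalR, this, mul_zero]
  rcases hA.2 _ _ hpq with h | h
  · have := h _ hv1.1
    rw [eval_pevalR] at this
    rw [show (fun i => Fin.addCases (motive := fun _ => ℂ) (fun i' => v1 (Fin.castAdd b i')) w1 i) = v1 from addCases_recomb v1] at this
    exact hf1 this
  · have := h _ hv2.1
    rw [eval_pevalR] at this
    rw [show (fun i => Fin.addCases (motive := fun _ => ℂ) (fun i' => v2 (Fin.castAdd b i')) w2 i) = v2 from addCases_recomb v2] at this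
    exact hg1 this

lemma ZIrred.image {a b : ℕ} {T : Set (Fin a → ℂ)} (hT : ZIrred T)
    (φ : Fin b → MvPolynomial (Fin a) ℂ) :
    ZIrred ((fun v j => eval v (φ j)) '' T) := by
  refine ⟨hT.1.image _, fun f g hfg => ?_⟩
  have : vanishesOn (bind₁ φ f * bind₁ φ g) T := by
    intro v hv
    rw [map_mul]
    rw [eval_bind₁', eval_bind₁']
    have := hfg _ ⟨v, hv, rfl⟩
    rw [map_mul] at this
    exact this
  rcases hT.2 _ _ this with h | h
  · left
    rintro p ⟨v, hv, rfl⟩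
    have := h v hv
    rwa [eval_bind₁'] at this
  · right
    rintro p ⟨v, hv, rfl⟩
    have := h v hv
    rwa [eval_bind₁'] at this

-- ℂ* in one variable
lemma ZIrred_units : ZIrred {v : Fin 1 → ℂ | v 0 ≠ 0} := by
  refine ⟨⟨fun _ => 1, one_ne_zero⟩, fun f g hfg => ?_⟩
  have hzero : X 0 * (f * g) = 0 := by
    apply MvPolynomial.funext (R := ℂ)
    intro x
    rw [map_mul, map_zero]
    by_cases hx : x 0 = 0
    · simp [hx]
    · rw [hfg x hx, mul_zero]
  have : f * g = 0 := by
    have hX : (X 0 : MvPolynomial (Fin 1) ℂ) ≠ 0 := MvPolynomial.X_ne_zero 0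
    rcases mul_eq_zero.mp hzero with h | h
    · exact absurd h hX
    · exact h
  rcases mul_eq_zero.mp this with h | h
  · left; intro v _; rw [h, map_zero]
  · right; intro v _; rw [h, map_zero]

lemma subset_zclosure {n : ℕ} (S : Set (Fin n → ℂ)) : S ⊆ zclosure S :=
  fun v hv f hf => hf v hv

lemma vanishesOn_zclosure {n : ℕ} {f : MvPolynomial (Fin n) ℂ} {S : Set (Fin n → ℂ)}
    (h : vanishesOn f S) : vanishesOn f (zclosure S) :=
  fun v hv => hv f h

lemma zclosure_idem {n : ℕ} (S : Set (Fin n → ℂ)) : zclosure (zclosure S) = zclosure S := by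
  apply Set.Subset.antisymm
  · intro v hv f hf
    exact hv f (vanishesOn_zclosure hf)
  · exact subset_zclosure _

lemma zclosure_mono {n : ℕ} {S S' : Set (Fin n → ℂ)} (h : S ⊆ S') :
    zclosure S ⊆ zclosure S' :=
  fun v hv f hf => hv f (fun w hw => hf w (h hw))

lemma vanishesOn_iff_zclosure {n : ℕ} {f : MvPolynomial (Fin n) ℂ} {S : Set (Fin n → ℂ)} :
    vanishesOn f S ↔ vanishesOn f (zclosure S) :=
  ⟨vanishesOn_zclosure, fun h v hv => h v (subset_zclosure S hv)⟩

lemma ZIrred.zclosure {n : ℕ} {S : Set (Fin n → ℂ)} (h : ZIrred S) : ZIrred (zclosure S) := by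
  refine ⟨h.1.mono (subset_zclosure S), fun f g hfg => ?_⟩
  rcases h.2 f g (vanishesOn_iff_zclosure.mpr hfg) with h' | h'
  · exact Or.inl (vanishesOn_zclosure h')
  · exact Or.inr (vanishesOn_zclosure h')

lemma zdim_zclosure {n : ℕ} (S : Set (Fin n → ℂ)) : zdim (zclosure S) = zdim S := by
  unfold zdim
  rw [zclosure_idem]

-- extraction of chains
lemma exists_ltseries {α : Type*} [Preorder α] (d : ℕ) (h : (d : WithBot ℕ∞) ≤ Order.krullDim α) :
    ∃ p : LTSeries α, d ≤ p.length := by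
  by_contra h'
  push_neg at h'
  rcases Nat.eq_zero_or_pos d with rfl | hd
  · cases isEmpty_or_nonempty α with
    | inl he => rw [Order.krullDim_eq_bot] at h; exact absurd h (by simp)
    | inr hne => exact absurd (h' (RelSeries.singleton _ (Classical.arbitrary α))) (by simp)
  · have hle : Order.krullDim α ≤ ((d - 1 : ℕ) : WithBot ℕ∞) := by
      apply iSup_le
      intro p
      have : p.length ≤ d - 1 := Nat.le_sub_one_of_lt (h' p)
      exact_mod_cast this
    have : (d : WithBot ℕ∞) ≤ ((d - 1 : ℕ) : WithBot ℕ∞) := le_trans h hle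
    have : d ≤ d - 1 := by exact_mod_cast this
    omega

-- key: strict containment of irreducible closed sets raises dimension
lemma eq_of_zdim_le {n : ℕ} {A B : Set (Fin n → ℂ)} (hA : zclosure A = A) (hB : zclosure B = B)
    (hAirr : ZIrred A) (hBirr : ZIrred B) (hAB : A ⊆ B) (d : ℕ)
    (hdA : (d : WithBot ℕ∞) ≤ zdim A) (hdB : zdim B ≤ (d : ℕ)) : A = B := by
  by_contra hne
  obtain ⟨p, hp⟩ := exists_ltseries d hdA
  -- map p into poset of B and snoc with B
  let e : {T : Set (Fin n → ℂ) // zclosure T = T ∧ ZIrred T ∧ T ⊆ zclosure A} →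
      {T : Set (Fin n → ℂ) // zclosure T = T ∧ ZIrred T ∧ T ⊆ zclosure B} :=
    fun T => ⟨T.1, T.2.1, T.2.2.1, le_trans (le_trans T.2.2.2 (le_of_eq hA)) (le_trans hAB (subset_zclosure B))⟩
  have hmono : StrictMono e := fun x y hxy => hxy
  have hlastmap : (p.map e hmono).last = e p.last := LTSeries.last_map p e hmono
  have hlt : (p.map e hmono).last < (⟨B, hB, hBirr, subset_zclosure B⟩ :
      {T : Set (Fin n → ℂ) // zclosure T = T ∧ ZIrred T ∧ T ⊆ zclosure B}) := by
    rw [hlastmap]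
    rw [Subtype.mk_lt_mk (p := fun T => zclosure T = T ∧ ZIrred T ∧ T ⊆ zclosure B)]
    have hsub : (p.last).1 ⊆ A := (p.last).2.2.2.trans hA.subset
    refine lt_of_le_of_ne (le_trans hsub hAB) ?_
    intro hcontr
    exact hne (Set.Subset.antisymm hAB (hcontr ▸ hsub))
  let q := (p.map e hmono).snoc ⟨B, hB, hBirr, subset_zclosure B⟩ hlt
  have hlen : (q.length : WithBot ℕ∞) ≤ zdim B := Order.LTSeries.length_le_krullDim q
  have hqlen : q.length = p.length + 1 := by simp [q, RelSeries.snoc, RelSeries.append]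
  have h1 : ((d + 1 : ℕ) : WithBot ℕ∞) ≤ zdim B := by
    refine le_trans ?_ hlen
    have : (d + 1 : ℕ) ≤ q.length := by omega
    exact_mod_cast this
  have : (d + 1 : ℕ) ≤ d := by exact_mod_cast le_trans h1 hdB
  omega

lemma prod_snoc_fn {n m : ℕ} (t : Fin m → (Fin n → ℂ)) (w : Fin n → ℂ) :
    (∏ i, Fin.snoc t w i) = (∏ i, t i) * w := by
  rw [Fin.prod_univ_castSucc]
  congr 1
  · exact Finset.prod_congr rfl (fun i _ => by simp)
  · simp

lemma hprodSet_succ_mem {n m : ℕ} {S : Set (Fin n → ℂ)} {q w : Fin n → ℂ}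
    (hq : q ∈ hprodSet S m) (hw : w ∈ S) : q * w ∈ hprodSet S (m+1) := by
  obtain ⟨t, ht, c, hc, hqc⟩ := hq
  refine ⟨Fin.snoc t w, fun i => ?_, c, hc, ?_⟩
  · refine Fin.lastCases ?_ (fun i => ?_) i <;> simp [ht, hw]
  · rw [prod_snoc_fn, hqc]
    funext j
    simp [mul_comm, mul_assoc, mul_left_comm]

lemma hprodSet_succ_decomp {n m : ℕ} {S : Set (Fin n → ℂ)} {p : Fin n → ℂ}
    (hp : p ∈ hprodSet S (m+1)) :
    ∃ q ∈ hprodSet S m, ∃ w ∈ S, p = q * w := by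
  obtain ⟨t, ht, c, hc, hpc⟩ := hp
  refine ⟨c • ∏ i : Fin m, t i.castSucc, ⟨fun i => t i.castSucc, fun i => ht _, c, hc, rfl⟩,
    t (Fin.last m), ht _, ?_⟩
  rw [hpc, Fin.prod_univ_castSucc]
  funext j
  simp [mul_assoc]

lemma hprodSet_mono {n m : ℕ} {S : Set (Fin n → ℂ)} (hone : (fun _ => (1:ℂ)) ∈ S) :
    hprodSet S m ⊆ hprodSet S (m+1) := by
  intro q hq
  have h := hprodSet_succ_mem hq hone
  have heq : q * (fun _ => (1:ℂ)) = q := by funext j; simp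
  rwa [heq] at h

lemma ZIrred_hprodSet {n : ℕ} {S : Set (Fin (n+1) → ℂ)} (hS : ZIrred S) (m : ℕ) :
    ZIrred (hprodSet S m) := by
  induction m with
  | zero =>
    have himg : hprodSet S 0 =
        (fun (v : Fin 1 → ℂ) (_ : Fin (n+1)) => eval v (X 0)) '' {v | v 0 ≠ 0} := by
      ext p
      constructor
      · rintro ⟨t, -, c, hc, rfl⟩
        refine ⟨fun _ => c, hc, ?_⟩
        funext j
        simp
      · rintro ⟨v, hv, rfl⟩
        exact ⟨Fin.elim0, fun i => i.elim0, v 0, hv, by funext j; simp⟩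
    rw [himg]
    exact ZIrred.image ZIrred_units _
  | succ m ih =>
    have himg : hprodSet S (m+1) =
        (fun (v : Fin ((n+1)+(n+1)) → ℂ) (j : Fin (n+1)) =>
          eval v (X (Fin.castAdd (n+1) j) * X (Fin.natAdd (n+1) j))) ''
          joinSet (hprodSet S m) S := by
      ext p
      constructor
      · intro hp
        obtain ⟨q, hq, w, hw, rfl⟩ := hprodSet_succ_decomp hp
        refine ⟨fun i => Fin.addCases (motive := fun _ => ℂ) q w i, mem_joinSet hq hw, ?_⟩
        funext j
        simp only [map_mul, eval_X, Fin.addCases_left, Fin.addCases_right, Pi.mul_apply]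
      · rintro ⟨v, hv, rfl⟩
        have heq : (fun j => eval v (X (Fin.castAdd (n+1) j) * X (Fin.natAdd (n+1) j)))
            = (fun j => v (Fin.castAdd (n+1) j)) * (fun j => v (Fin.natAdd (n+1) j)) := by
          funext j; simp
        simp only [heq]
        exact hprodSet_succ_mem hv.1 hv.2
    rw [himg]
    exact ZIrred.image (ZIrred.join ih hS) _

-- shift lemma
lemma vanish_shift {n m m' : ℕ} {S : Set (Fin n → ℂ)}
    (heq : hpow S m = hpow S m') {f : MvPolynomial (Fin n) ℂ}
    (hf : vanishesOn f (hprodSet S (m+1))) :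
    vanishesOn f (hprodSet S (m'+1)) := by
  intro p hp
  obtain ⟨q, hq, w, hw, rfl⟩ := hprodSet_succ_decomp hp
  set g := bind₁ (fun j => (MvPolynomial.C (w j) : MvPolynomial (Fin n) ℂ) * X j) f with hgdef
  have hevalg : ∀ q' : Fin n → ℂ, eval q' g = eval (q' * w) f := by
    intro q'
    rw [hgdef, eval_bind₁']
    have hv : (fun i => eval q' ((MvPolynomial.C (w i) : MvPolynomial (Fin n) ℂ) * X i)) = q' * w := by
      funext j
      simp [mul_comm]
    rw [hv]
  have hg : vanishesOn g (hprodSet S m) := by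
    intro q' hq'
    rw [hevalg]
    exact hf _ (hprodSet_succ_mem hq' hw)
  have hg' : vanishesOn g (hprodSet S m') := by
    intro q' hq'
    have hmem : q' ∈ hpow S m := by
      rw [heq]
      exact subset_zclosure _ hq'
    exact (vanishesOn_zclosure hg) q' hmem
  rw [← hevalg]
  exact hg' q hq

lemma hpow_succ_congr {n m m' : ℕ} {S : Set (Fin n → ℂ)}
    (heq : hpow S m = hpow S m') : hpow S (m+1) = hpow S (m'+1) := by
  have hiff : ∀ f, vanishesOn f (hprodSet S (m+1)) ↔ vanishesOn f (hprodSet S (m'+1)) :=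
    fun f => ⟨vanish_shift heq, vanish_shift heq.symm⟩
  ext v
  constructor
  · intro hv f hf
    exact hv f ((hiff f).mpr hf)
  · intro hv f hf
    exact hv f ((hiff f).mp hf)

-- coordinate subspaces
def Lset (n k : ℕ) : Set (Fin n → ℂ) := {v | ∀ j : Fin n, k ≤ (j:ℕ) → v j = 0}

lemma Lset_closed (n k : ℕ) : zclosure (Lset n k) = Lset n k := by
  apply Set.Subset.antisymm
  · intro v hv j hj
    have := hv (X j) (fun w hw => by simpa using hw j hj)
    simpa using this
  · exact subset_zclosure _

lemma ZIrred_Lset (n k : ℕ) : ZIrred (Lset n k) := by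
  refine ⟨⟨fun _ => 0, fun j _ => rfl⟩, fun f g hfg => ?_⟩
  set π := bind₁ (fun j : Fin n => if (j:ℕ) < k then (X j : MvPolynomial (Fin n) ℂ) else 0)
    with hπ
  have hπeval : ∀ (v : Fin n → ℂ) (h : MvPolynomial (Fin n) ℂ),
      eval v (π h) = eval (fun j : Fin n => if (j:ℕ) < k then v j else 0) h := by
    intro v h
    rw [hπ, eval_bind₁']
    have hv : (fun i => eval v ((fun j : Fin n => if (j:ℕ) < k then (X j : MvPolynomial (Fin n) ℂ) else 0) i))
        = fun j : Fin n => if (j:ℕ) < k then v j else 0 := by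
      funext j
      split_ifs with hc <;> simp [hc]
    rw [hv]
  have hmem : ∀ v : Fin n → ℂ, (fun j : Fin n => if (j:ℕ) < k then v j else 0) ∈ Lset n k := by
    intro v j hj
    simp only
    rw [if_neg (by omega)]
  have hvan : ∀ h : MvPolynomial (Fin n) ℂ, vanishesOn h (Lset n k) ↔ π h = 0 := by
    intro h
    constructor
    · intro hh
      apply MvPolynomial.funext (R := ℂ)
      intro v
      rw [hπeval, map_zero]
      exact hh _ (hmem v)
    · intro hh v hv
      have hvrec : (fun j : Fin n => if (j:ℕ) < k then v j else 0) = v := by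
        funext j
        by_cases hc : (j:ℕ) < k
        · simp [hc]
        · rw [if_neg hc]
          exact (hv j (le_of_not_gt hc)).symm
      have := hπeval v h
      rw [hh, map_zero, hvrec] at this
      exact this.symm
  have hprod : π f * π g = 0 := by
    rw [← map_mul]
    exact (hvan _).mp hfg
  rcases mul_eq_zero.mp hprod with h | h
  · exact Or.inl ((hvan f).mpr h)
  · exact Or.inr ((hvan g).mpr h)

lemma Lset_mono (n : ℕ) {k k' : ℕ} (h : k ≤ k') : Lset n k ⊆ Lset n k' := by
  intro v hv j hj
  exact hv j (le_trans h hj)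

lemma zdim_univ_ge (n : ℕ) : ((n:ℕ) : WithBot ℕ∞) ≤ zdim (Set.univ : Set (Fin n → ℂ)) := by
  let elt : Fin (n+1) → {T : Set (Fin n → ℂ) //
      zclosure T = T ∧ ZIrred T ∧ T ⊆ zclosure (Set.univ : Set (Fin n → ℂ))} :=
    fun k => ⟨Lset n k, Lset_closed n k, ZIrred_Lset n k,
      le_trans (Set.subset_univ _) (subset_zclosure _)⟩
  have hstep : ∀ i : Fin n, elt i.castSucc < elt i.succ := by
    intro i
    rw [Subtype.mk_lt_mk]
    refine lt_of_le_of_ne (Lset_mono n (by simp [Fin.coe_castSucc, Fin.val_succ])) ?_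
    intro hcontr
    have hmem : (fun j : Fin n => if (j:ℕ) = (i:ℕ) then (1:ℂ) else 0) ∈ Lset n (i.succ : ℕ) := by
      intro j hj
      show (if (j:ℕ) = (i:ℕ) then (1:ℂ) else 0) = 0
      rw [Fin.val_succ] at hj
      rw [if_neg (by omega)]
    rw [← hcontr] at hmem
    have h2 := hmem i (by simp)
    simp at h2
  let p : LTSeries {T : Set (Fin n → ℂ) //
      zclosure T = T ∧ ZIrred T ∧ T ⊆ zclosure (Set.univ : Set (Fin n → ℂ))} :=
    ⟨n, elt, hstep⟩
  have := Order.LTSeries.length_le_krullDim p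
  exact this

/-- let `C ⊂ ℙ^N` be an irreducible curve (affine cone of dimension 2)
through `(1:⋯:1)` with no point having two zero coordinates. If for some `2 ≤ s ≤ N` the
Hadamard powers stop growing at step `s` (projective dimensions: `dim C^{⋆s} ≤ s−1` while
`dim C^{⋆r} = r` for `r ≤ s−1`), then `C^{⋆m} = C^{⋆(s−1)}` for all `m ≥ s−1`, no
Hadamard power fills `ℙ^N`, and the generic Hadamard-`C`-rank is infinite. -/
theorem stmt15 (N : ℕ) (C : Set (Fin (N + 1) → ℂ)) (hirr : ZIrred C)
    (hone : (fun _ => (1 : ℂ)) ∈ C)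
    (hΔ : ∀ v ∈ C, Nat.card {i : Fin (N + 1) // v i = 0} ≤ 1)
    (hdim : zdim C = (2 : ℕ))
    (s : ℕ) (hs2 : 2 ≤ s) (hsN : s ≤ N)
    (hdrop : zdim (hpow C s) ≤ (s : ℕ))
    (hgrow : ∀ r, 1 ≤ r → r ≤ s - 1 → zdim (hpow C r) = (r + 1 : ℕ)) :
    (∀ m, s - 1 ≤ m → hpow C m = hpow C (s - 1)) ∧
    ∀ m, 1 ≤ m → hpow C m ≠ Set.univ := by
  have hclosed : ∀ m, zclosure (hpow C m) = hpow C m := fun m => zclosure_idem _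
  have hirrm : ∀ m, ZIrred (hpow C m) := fun m => (ZIrred_hprodSet hirr m).zclosure
  have hsub : hpow C (s-1) ⊆ hpow C s := by
    have h1 : s - 1 + 1 = s := by omega
    rw [← h1]
    exact zclosure_mono (hprodSet_mono hone)
  have hdA : ((s:ℕ) : WithBot ℕ∞) ≤ zdim (hpow C (s-1)) := by
    have := hgrow (s-1) (by omega) le_rfl
    rw [this]
    have : (s - 1 + 1 : ℕ) = s := by omega
    rw [this]
  have hstep1 : hpow C (s-1) = hpow C s :=
    eq_of_zdim_le (hclosed _) (hclosed _) (hirrm _) (hirrm _) hsub s hdA hdrop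
  have hall : ∀ m, s - 1 ≤ m → hpow C m = hpow C (s - 1) := by
    intro m hm
    induction m, hm using Nat.le_induction with
    | base => rfl
    | succ m hm ih =>
      have := hpow_succ_congr (m := m) (m' := s - 1) ih
      rw [this]
      have h1 : s - 1 + 1 = s := by omega
      rw [h1, ← hstep1]
  refine ⟨hall, ?_⟩
  intro m hm hcontr
  have hdm : zdim (hpow C m) ≤ ((s:ℕ) : WithBot ℕ∞) := by
    by_cases hc : m ≤ s - 1
    · rw [hgrow m hm hc]
      have : (m + 1 : ℕ) ≤ s := by omega
      exact_mod_cast this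
    · rw [hall m (by omega), hgrow (s-1) (by omega) le_rfl]
      have : (s - 1 + 1 : ℕ) ≤ s := by omega
      exact_mod_cast this
  rw [hcontr] at hdm
  have huniv := zdim_univ_ge (N+1)
  have : ((N+1 : ℕ) : WithBot ℕ∞) ≤ ((s:ℕ) : WithBot ℕ∞) := le_trans huniv hdm
  have : N + 1 ≤ s := by exact_mod_cast this
  omega
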